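/- For the qutrit perfect tensor channel E with E(μ^α) = λ_α μ^α, the symmetric traceless matrix μ^{β³} with (μ^{β³})_{01} = (μ^{β³})_{10} = 1 and all other entries 0 satisfies E(μ^{β³}) = (1/2) μ^{β³}, and the antisymmetric matrix μ^{α³} with (μ^{α³})_{10} = 1, (μ^{α³})_{01} = −1 and zeros elsewhere satisfies E(μ^{α³}) = −(1/2) μ^{α³}. -/

import Mathlib

open Matrix Kronecker

/-- The qutrit three-leg perfect tensor. -/
noncomputable def perfectV : Matrix (Fin 3 × Fin 3) (Fin 3) ℂ :=
  fun jk l =>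
    if jk.1 = jk.2 ∨ jk.2 = l ∨ l = jk.1 then 0
    else (1 : ℂ) / Real.sqrt 2

/-- The ascending map `E(X) = V†(X ⊗ I)V`. -/
noncomputable def ascendE (X : Matrix (Fin 3) (Fin 3) ℂ) : Matrix (Fin 3) (Fin 3) ℂ :=
  perfectVᴴ * (X ⊗ₖ (1 : Matrix (Fin 3) (Fin 3) ℂ)) * perfectV

lemma sq2 : ((Real.sqrt 2 : ℂ) ^ 2)⁻¹ = 1 / 2 := by
  rw [show ((Real.sqrt 2 : ℂ))^2 = 2 by norm_cast; exact Real.sq_sqrt (by norm_num)]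
  norm_num

set_option maxHeartbeats 2000000 in
/-- The symmetric matrix `μ^{β³}` is an eigenvector of `E` with eigenvalue `1/2`,
and the antisymmetric matrix `μ^{α³}` is an eigenvector with eigenvalue `−1/2`. -/
theorem ascendE_eigenvectors :
    ascendE !![0, 1, 0; 1, 0, 0; 0, 0, 0] =
      (1 / 2 : ℂ) • !![0, 1, 0; 1, 0, 0; 0, 0, 0] ∧
    ascendE !![0, -1, 0; 1, 0, 0; 0, 0, 0] =
      (-(1 / 2) : ℂ) • !![0, -1, 0; 1, 0, 0; 0, 0, 0] := by
  constructor <;>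
  · ext i j
    fin_cases i <;> fin_cases j <;>
      simp [ascendE, perfectV, Matrix.mul_apply, Fintype.sum_prod_type,
        Fin.sum_univ_succ, Matrix.one_apply, Matrix.vecHead,
        Matrix.vecTail] <;>
      · ring_nf
        try rw [inv_pow]
        try exact sq2
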